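/- Let a < c be real numbers and let h : [a,c] → ℝ be a function such that c is the unique root of h in [a,c], h is differentiable on [a,c] with h′(x) ≠ 0 for every x ∈ [a,c], h′′(x) exists for every x ∈ (a,c), h(x)·h′′(x) ≥ 0 for all x ∈ (a,c), and h(x)·h′(x) < 0 for all x ∈ [a,c). For any x₀ ∈ [a,c], define the Newton–Raphson iteration x_{n+1} = x_n − h(x_n)/h′(x_n) for all n ≥ 0. Then the sequence (x_n) converges to c, and h(c) = 0. -/

import Mathlib

open Set Filter

/-- Auxiliary lemma: Newton's method converges when `h` is positive at `a`. -/
lemma newton_aux_pos (a c : ℝ) (hac : a < c) (h h' h'' : ℝ → ℝ)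
    (hroot : h c = 0)
    (huniq : ∀ x ∈ Set.Icc a c, h x = 0 → x = c)
    (hd1 : ∀ x ∈ Set.Icc a c, HasDerivWithinAt h (h' x) (Set.Icc a c) x)
    (hd1ne : ∀ x ∈ Set.Icc a c, h' x ≠ 0)
    (hd2 : ∀ x ∈ Set.Ioo a c, HasDerivAt h' (h'' x) x)
    (hconv : ∀ x ∈ Set.Ioo a c, h x * h'' x ≥ 0)
    (hsign : ∀ x ∈ Set.Ico a c, h x * h' x < 0)
    (x : ℕ → ℝ) (hx0 : x 0 ∈ Set.Icc a c)
    (hrec : ∀ n, x (n + 1) = x n - h (x n) / h' (x n))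
    (hapos : 0 < h a) :
    Filter.Tendsto x Filter.atTop (nhds c) := by
  have hcont : ContinuousOn h (Set.Icc a c) := fun t ht => (hd1 t ht).continuousWithinAt
  -- h is positive on [a, c)
  have hpos : ∀ t ∈ Set.Ico a c, 0 < h t := by
    intro t ht
    rcases lt_trichotomy (h t) 0 with hlt | heq | hgt
    · exfalso
      have hsub : Set.Icc a t ⊆ Set.Icc a c := Set.Icc_subset_Icc le_rfl ht.2.le
      obtain ⟨z, hz, hz0⟩ := intermediate_value_Icc' ht.1 (hcont.mono hsub) ⟨hlt.le, hapos.le⟩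
      have hzc : z = c := huniq z (hsub hz) hz0
      have hzlt : z < c := lt_of_le_of_lt hz.2 ht.2
      exact absurd hzc (ne_of_lt hzlt)
    · exact absurd (huniq t ⟨ht.1, ht.2.le⟩ heq) (ne_of_lt ht.2)
    · exact hgt
  -- h' is negative on [a, c)
  have hneg : ∀ t ∈ Set.Ico a c, h' t < 0 := by
    intro t ht
    have h1 := hpos t ht
    have h2 := hsign t ht
    nlinarith
  -- h is convex on [a, c]
  have hcvx : ConvexOn ℝ (Set.Icc a c) h := by
    apply convexOn_of_hasDerivWithinAt2_nonneg (convex_Icc a c) hcont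
      (f' := h') (f'' := h'')
    · intro t ht
      rw [interior_Icc] at ht ⊢
      exact (hd1 t (Set.Ioo_subset_Icc_self ht)).mono Set.Ioo_subset_Icc_self
    · intro t ht
      rw [interior_Icc] at ht ⊢
      exact (hd2 t ht).hasDerivWithinAt
    · intro t ht
      rw [interior_Icc] at ht
      have h1 := hpos t ⟨ht.1.le, ht.2⟩
      have h2 := hconv t ht
      nlinarith
  -- the key one-step estimate
  have key : ∀ t ∈ Set.Icc a c, t ≤ t - h t / h' t ∧ t - h t / h' t ≤ c := by
    intro t ht
    rcases eq_or_lt_of_le ht.2 with heq | hlt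
    · subst heq
      simp [hroot]
    · have hpt := hpos t ⟨ht.1, hlt⟩
      have hnt := hneg t ⟨ht.1, hlt⟩
      constructor
      · have : h t / h' t < 0 := div_neg_of_pos_of_neg hpt hnt
        linarith
      · have hslope : h' t ≤ slope h t c :=
          hcvx.le_slope_of_hasDerivWithinAt ht (Set.right_mem_Icc.2 (le_of_lt hac))
            hlt (hd1 t ht)
        rw [slope_def_field, hroot] at hslope
        have hct : 0 < c - t := by linarith
        have h1 : h' t * (c - t) ≤ 0 - h t := (le_div_iff₀ hct).1 hslope
        have h2 : h' t * (h t / h' t) = h t := mul_div_cancel₀ (h t) (ne_of_lt hnt)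
        nlinarith [mul_pos (neg_pos.2 hnt) hct]
  -- all iterates stay in [a,c]
  have hmem : ∀ n, x n ∈ Set.Icc a c := by
    intro n
    induction n with
    | zero => exact hx0
    | succ k ih =>
      have := key (x k) ih
      rw [hrec k]
      exact ⟨le_trans ih.1 this.1, this.2⟩
  -- the sequence is monotone
  have hmono : Monotone x := by
    apply monotone_nat_of_le_succ
    intro n
    rw [hrec n]
    exact (key (x n) (hmem n)).1
  have hbdd : BddAbove (Set.range x) := ⟨c, by rintro _ ⟨n, rfl⟩; exact (hmem n).2⟩
  set L := ⨆ n, x n with hLdef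
  have hL : Filter.Tendsto x Filter.atTop (nhds L) := tendsto_atTop_ciSup hmono hbdd
  have hxL : ∀ n, x n ≤ L := fun n => le_ciSup hbdd n
  have hLc : L ≤ c := ciSup_le fun n => (hmem n).2
  have haL : a ≤ L := le_trans hx0.1 (hxL 0)
  have hLmem : L ∈ Set.Icc a c := ⟨haL, hLc⟩
  -- h(x n) → h L
  have hhL : Filter.Tendsto (fun n => h (x n)) Filter.atTop (nhds (h L)) := by
    apply (hcont L hLmem).tendsto.comp
    rw [tendsto_nhdsWithin_iff]
    exact ⟨hL, Filter.Eventually.of_forall hmem⟩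
  -- main claim: L = c
  have hLeq : L = c := by
    by_contra hne
    have hLlt : L < c := lt_of_le_of_ne hLc hne
    have hLpos : 0 < h L := hpos L ⟨haL, hLlt⟩
    -- all iterates are < c, and x 1 > a
    have hxlt : ∀ n, x n < c := fun n => lt_of_le_of_lt (hxL n) hLlt
    have hx1 : a < x 1 := by
      rcases eq_or_lt_of_le hx0.1 with heq | hlt
      · have h0c : x 0 ∈ Set.Ico a c := ⟨hx0.1, hxlt 0⟩
        have hq : h (x 0) / h' (x 0) < 0 :=
          div_neg_of_pos_of_neg (hpos _ h0c) (hneg _ h0c)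
        rw [hrec 0, heq]
        linarith
      · exact lt_of_lt_of_le hlt (hmono (Nat.zero_le 1))
    set m := slope h a (x 1) with hmdef
    -- h' is bounded below by m for n ≥ 1
    have hbound : ∀ n, 1 ≤ n → m ≤ h' (x n) := by
      intro n hn
      have hxn := hmem n
      have hxna : a < x n := lt_of_lt_of_le hx1 (hmono hn)
      have h1 : slope h a (x n) ≤ h' (x n) :=
        hcvx.slope_le_of_hasDerivWithinAt (Set.left_mem_Icc.2 hac.le) hxn hxna (hd1 _ hxn)
      have h2 : m ≤ slope h a (x n) := by
        apply hcvx.slope_mono (Set.left_mem_Icc.2 hac.le)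
          ⟨hmem 1, by simp [ne_of_gt hx1]⟩ ⟨hxn, by simp [ne_of_gt hxna]⟩ (hmono hn)
      linarith
    -- h (x n) ≤ m * (x n - x (n+1)) for n ≥ 1
    have hkey : ∀ n, 1 ≤ n → h (x n) ≤ m * (x n - x (n + 1)) := by
      intro n hn
      have hxn := hmem n
      have heq : h (x n) = h' (x n) * (x n - x (n + 1)) := by
        have hne' := hd1ne (x n) hxn
        rw [hrec n]
        field_simp
        ring
      have hstep : x n - x (n + 1) ≤ 0 := by
        have := hmono (Nat.le_succ n)
        linarith
      calc h (x n) = h' (x n) * (x n - x (n + 1)) := heq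
        _ ≤ m * (x n - x (n + 1)) := mul_le_mul_of_nonpos_right (hbound n hn) hstep
    -- RHS tends to 0
    have hx1' : Filter.Tendsto (fun n => x (n + 1)) Filter.atTop (nhds L) :=
      hL.comp (Filter.tendsto_add_atTop_nat 1)
    have hrhs : Filter.Tendsto (fun n => m * (x n - x (n + 1))) Filter.atTop (nhds 0) := by
      have : Filter.Tendsto (fun n => m * (x n - x (n + 1))) Filter.atTop
          (nhds (m * (L - L))) := (tendsto_const_nhds.mul (hL.sub hx1'))
      simpa using this
    have : h L ≤ 0 :=
      le_of_tendsto_of_tendsto hhL hrhs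
        (Filter.eventually_atTop.2 ⟨1, fun n hn => hkey n hn⟩)
    linarith
  rwa [hLeq] at hL

theorem stmt_8 (a c : ℝ) (hac : a < c) (h h' h'' : ℝ → ℝ)
    (hroot : h c = 0)
    (huniq : ∀ x ∈ Set.Icc a c, h x = 0 → x = c)
    (hd1 : ∀ x ∈ Set.Icc a c, HasDerivWithinAt h (h' x) (Set.Icc a c) x)
    (hd1ne : ∀ x ∈ Set.Icc a c, h' x ≠ 0)
    (hd2 : ∀ x ∈ Set.Ioo a c, HasDerivAt h' (h'' x) x)
    (hconv : ∀ x ∈ Set.Ioo a c, h x * h'' x ≥ 0)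
    (hsign : ∀ x ∈ Set.Ico a c, h x * h' x < 0)
    (x : ℕ → ℝ) (hx0 : x 0 ∈ Set.Icc a c)
    (hrec : ∀ n, x (n + 1) = x n - h (x n) / h' (x n)) :
    Filter.Tendsto x Filter.atTop (nhds c) ∧ h c = 0 := by
  refine ⟨?_, hroot⟩
  have ha : a ∈ Set.Ico a c := ⟨le_rfl, hac⟩
  have hne : h a ≠ 0 := fun h0 => by simpa [h0] using hsign a ha
  rcases hne.lt_or_gt with hneg | hpos
  · -- apply the aux lemma to -h
    exact newton_aux_pos a c hac (fun t => -h t) (fun t => -h' t) (fun t => -h'' t)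
      (by simp [hroot])
      (fun t ht h0 => huniq t ht (by simpa using h0))
      (fun t ht => (hd1 t ht).neg)
      (fun t ht => neg_ne_zero.2 (hd1ne t ht))
      (fun t ht => (hd2 t ht).neg)
      (fun t ht => by simpa [neg_mul_neg] using hconv t ht)
      (fun t ht => by simpa [neg_mul_neg] using hsign t ht)
      x hx0
      (fun n => by rw [hrec n, neg_div_neg_eq])
      (by simpa using hneg)
  · exact newton_aux_pos a c hac h h' h'' hroot huniq hd1 hd1ne hd2 hconv hsign
      x hx0 hrec hpos
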